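/- Every deterministic product of regular languages L₀ a₁ L₁ ⋯ a_k L_k is an unambiguous product: each word u in the product admits exactly one factorization u = u₀ a₁ u₁ ⋯ a_k u_k with u_i ∈ L_i for all i. -/

import Mathlib

namespace Products

variable {A : Type*}

/-- `Fact Ls as ws u`: the list `ws = [u₀,…,u_k]` is a factorization
`u = u₀ a₁ u₁ ⋯ a_k u_k` with `u_i ∈ L_i`, witnessing membership of `u` in the
product `L₀a₁L₁⋯a_kL_k`, where `Ls = [L₀,…,L_k]` and `as = [a₁,…,a_k]`. -/
inductive Fact : List (Set (List A)) → List A → List (List A) → List A → Prop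
  | single {L : Set (List A)} {w : List A} : w ∈ L → Fact [L] [] [w] w
  | cons {L : Set (List A)} {Ls : List (Set (List A))} {as : List A} {a : A}
      {w : List A} {ws : List (List A)} {u : List A} :
      w ∈ L → Fact Ls as ws u → Fact (L :: Ls) (a :: as) (w :: ws) (w ++ a :: u)

/-- Membership in the product `L₀a₁L₁⋯a_kL_k`. -/
def InProd (Ls : List (Set (List A))) (as : List A) (u : List A) : Prop :=
  ∃ ws, Fact Ls as ws u

/-- Membership of `p` in the prefix language `L₀a₁L₁⋯L_{i-1}a_i` (for `1 ≤ i ≤ k`). -/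
def InPrefixProd (Ls : List (Set (List A))) (as : List A) (i : ℕ) (p : List A) : Prop :=
  ∃ q ai, as[i - 1]? = some ai ∧ p = q ++ [ai] ∧
    InProd (Ls.take i) (as.take (i - 1)) q

/-- The product `L₀a₁L₁⋯a_kL_k` is deterministic: for each `1 ≤ i ≤ k`, every
word of the product has a unique prefix in `L₀a₁L₁⋯L_{i-1}a_i`. -/
def Deterministic (Ls : List (Set (List A))) (as : List A) : Prop :=
  ∀ i, 1 ≤ i → i ≤ as.length → ∀ u, InProd Ls as u →
    ∃! p : List A, p <+: u ∧ InPrefixProd Ls as i p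

lemma fact_cons_inv {L : Set (List A)} {Ls : List (Set (List A))} {a : A} {as : List A}
    {ws : List (List A)} {u : List A} (h : Fact (L :: Ls) (a :: as) ws u) :
    ∃ w ws₁ u₁, ws = w :: ws₁ ∧ u = w ++ a :: u₁ ∧ w ∈ L ∧ Fact Ls as ws₁ u₁ := by
  cases h with
  | cons hw hf => exact ⟨_, _, _, rfl, rfl, hw, hf⟩

lemma key : ∀ (as : List A) (Ls : List (Set (List A))) (u : List A)
    (ws ws' : List (List A)), Fact Ls as ws u → Fact Ls as ws' u →
    (∀ i, 1 ≤ i → i ≤ as.length → ∀ p p', p <+: u → InPrefixProd Ls as i p →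
      p' <+: u → InPrefixProd Ls as i p' → p = p') → ws = ws' := by
  intro as
  induction as with
  | nil =>
    intro Ls u ws ws' h1 h2 _
    cases h1; cases h2; rfl
  | cons a as ih =>
    intro Ls u ws ws' h1 h2 hyp
    match Ls with
    | [] => cases h1
    | L :: Ls' =>
      obtain ⟨w, ws₁, u₁, rfl, hu, hw, hf⟩ := fact_cons_inv h1
      obtain ⟨w', ws₁', u₁', rfl, hu', hw', hf'⟩ := fact_cons_inv h2
      subst hu
      -- use hyp at i = 1 to get w = w'
      have hpre : ∀ (v t : List A), (v ++ [a]) <+: (v ++ a :: t) :=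
        fun v t => ⟨t, by simp⟩
      have hin : ∀ (v : List A), v ∈ L → InPrefixProd (L :: Ls') (a :: as) 1 (v ++ [a]) :=
        fun v hv => ⟨v, a, rfl, rfl, ⟨[v], Fact.single hv⟩⟩
      have hw1 : w ++ [a] = w' ++ [a] :=
        hyp 1 le_rfl (by simp) (w ++ [a]) (w' ++ [a])
          (hpre w u₁) (hin w hw) (hu' ▸ hpre w' u₁') (hin w' hw')
      have hww' : w = w' := by simpa using hw1
      subst hww'
      have hu : u₁ = u₁' := by simpa using hu'
      subst hu
      have : ws₁ = ws₁' := by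
        apply ih Ls' u₁ ws₁ ws₁' hf hf'
        intro i hi1 hi2 p p' hp hpp hp' hpp'
        obtain ⟨j, rfl⟩ : ∃ j, i = j + 1 := ⟨i - 1, (Nat.succ_pred_eq_of_pos hi1).symm⟩
        have lift : ∀ (q : List A), InPrefixProd Ls' as (j + 1) q →
            InPrefixProd (L :: Ls') (a :: as) (j + 2) (w ++ a :: q) := by
          rintro q ⟨r, ai, hget, rfl, ⟨rs, hr⟩⟩
          refine ⟨w ++ a :: r, ai, ?_, by simp, ⟨w :: rs, ?_⟩⟩
          · simpa using hget
          · simpa using Fact.cons hw hr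
        have liftpre : ∀ (q : List A), q <+: u₁ → (w ++ a :: q) <+: (w ++ a :: u₁) := by
          rintro q ⟨t, rfl⟩
          exact ⟨t, by simp⟩
        have heq := hyp (j + 2) (by omega) (by simpa using Nat.succ_le_succ hi2)
          (w ++ a :: p) (w ++ a :: p') (liftpre p hp) (lift p hpp)
          (liftpre p' hp') (lift p' hpp')
        have h3 : a :: p = a :: p' := List.append_cancel_left heq
        simpa using h3
      rw [this]

/-- Every deterministic product of regular languages is unambiguous: each word of
the product admits exactly one factorization. -/
theorem stmt18 (Ls : List (Set (List A))) (as : List A)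
    (hlen : Ls.length = as.length + 1)
    (hreg : ∀ L ∈ Ls, Language.IsRegular (L : Language A))
    (hdet : Deterministic Ls as) :
    ∀ u : List A, ∀ ws ws' : List (List A),
      Fact Ls as ws u → Fact Ls as ws' u → ws = ws' := by
  intro u ws ws' h1 h2
  apply key as Ls u ws ws' h1 h2
  intro i hi1 hi2 p p' hp hpp hp' hpp'
  obtain ⟨q, hq, huniq⟩ := hdet i hi1 hi2 u ⟨ws, h1⟩
  rw [huniq p ⟨hp, hpp⟩, huniq p' ⟨hp', hpp'⟩]

end Products
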